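/- Let A be a 2-divisible abelian group, C an abelian group, and ψ : C × C → A an equalized 2-cocycle. If two characters χ₁ and χ₂ of (A × C, ⊞) lie in the same coadjoint orbit of B_ψ, then Stab(χ₁) = Stab(χ₂), and χ₁(x) = χ₂(x) for every x ∈ A × C that underlies an element of Stab(χ₁). -/

import Mathlib

/-- A 2-cocycle on `C` with values in `A` (trivial action of `C` on `A`). -/
def IsCocycle {A C : Type*} [AddCommGroup A] [AddCommGroup C] (ψ : C → C → A) : Prop :=
  ∀ c₁ c₂ c₃ : C, ψ c₁ c₂ + ψ (c₁ + c₂) c₃ = ψ c₁ (c₂ + c₃) + ψ c₂ c₃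

/-- A 2-cocycle `ψ` is equalized iff `ψ(c, -c) = 0` for all `c`. -/
def Equalized {A C : Type*} [AddCommGroup A] [AddCommGroup C] (ψ : C → C → A) : Prop :=
  ∀ c : C, ψ c (-c) = 0

/-- The skew-symmetrization `η(c₁,c₂) = ψ(c₁,c₂) - ψ(c₂,c₁)` of a 2-cocycle. -/
def eta {A C : Type*} [AddCommGroup A] [AddCommGroup C] (ψ : C → C → A)
    (c₁ c₂ : C) : A :=
  ψ c₁ c₂ - ψ c₂ c₁

/-- The addition `⊞` on `A × C` given by `φ(c₁,c₂) = (ψ(c₁,c₂)+ψ(c₂,c₁))/2`,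
where `half` is the halving map of the 2-divisible group `A`. -/
def boxAdd {A C : Type*} [AddCommGroup A] [AddCommGroup C] (half : A → A)
    (ψ : C → C → A) (x y : A × C) : A × C :=
  (x.1 + y.1 + half (ψ x.2 y.2 + ψ y.2 x.2), x.2 + y.2)

/-- A character of `(A × C, ⊞)`: a map `χ : A × C → ℂˣ` with `χ(x ⊞ y) = χ(x)·χ(y)`. -/
def IsChar {A C : Type*} [AddCommGroup A] [AddCommGroup C] (half : A → A)
    (ψ : C → C → A) (χ : A × C → ℂˣ) : Prop :=
  ∀ x y : A × C, χ (boxAdd half ψ x y) = χ x * χ y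

/-- The coadjoint action of `b ∈ B_ψ` on characters: `(b • χ)(a,c) = χ(a - η(c_b,c), c)`. -/
def coact {A C : Type*} [AddCommGroup A] [AddCommGroup C] (ψ : C → C → A)
    (b : A × C) (χ : A × C → ℂˣ) : A × C → ℂˣ :=
  fun x => χ (x.1 - eta ψ b.2 x.2, x.2)

/-- **Stabilizer lemma.** Let `A` be 2-divisible (with halving map `half`),
`C` abelian, `ψ` an equalized 2-cocycle. If two characters `χ₁, χ₂` of `(A × C, ⊞)` lie in
the same coadjoint orbit of `B_ψ`, then `Stab(χ₁) = Stab(χ₂)`, and `χ₁(x) = χ₂(x)` for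
every `x` underlying an element of `Stab(χ₁)`. -/
theorem stabilizer_lemma {A C : Type*} [AddCommGroup A] [AddCommGroup C]
    (half : A → A) (hbij : Function.Bijective (fun a : A => a + a))
    (hhalf : ∀ a : A, half a + half a = a)
    (ψ : C → C → A) (hψ : IsCocycle ψ) (heq : Equalized ψ)
    (χ₁ χ₂ : A × C → ℂˣ) (h₁ : IsChar half ψ χ₁) (h₂ : IsChar half ψ χ₂)
    (horb : ∃ g : A × C, χ₂ = coact ψ g χ₁) :
    {b : A × C | coact ψ b χ₁ = χ₁} = {b : A × C | coact ψ b χ₂ = χ₂} ∧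
    ∀ x : A × C, coact ψ x χ₁ = χ₁ → χ₁ x = χ₂ x := by
  obtain ⟨g, hg⟩ := horb
  have h00 : ψ (0:C) (0:C) = 0 := by simpa using heq 0
  have hpsi0r : ∀ c : C, ψ c 0 = 0 := by
    intro c
    have h := hψ c 0 0
    simp only [add_zero, zero_add] at h
    rw [add_left_cancel h, h00]
  have hpsi0l : ∀ c : C, ψ 0 c = 0 := by
    intro c
    have h := hψ 0 0 c
    simp only [add_zero, zero_add, h00] at h
    have h' : ψ 0 c + 0 = ψ 0 c + ψ 0 c := by rw [add_zero]; exact h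
    exact (add_left_cancel h').symm
  have half0 : half 0 = 0 := by
    have : (fun a : A => a + a) (half 0) = (fun a : A => a + a) 0 := by
      simp [hhalf 0]
    exact hbij.1 this
  -- splitting lemma
  have haux : ∀ (χ : A × C → ℂˣ), IsChar half ψ χ →
      ∀ (a a' : A) (c : C), χ (a + a', c) = χ (a, 0) * χ (a', c) := by
    intro χ hχ a a' c
    have h := hχ (a, 0) (a', c)
    simp only [boxAdd, hpsi0l, hpsi0r, add_zero, zero_add, half0] at h
    exact h
  have hone : ∀ (χ : A × C → ℂˣ), IsChar half ψ χ → χ (0, 0) = 1 := by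
    intro χ hχ
    have h := hχ (0, 0) (0, 0)
    simp only [boxAdd, h00, add_zero, zero_add, half0] at h
    exact (right_eq_mul.mp h)
  have hinv : ∀ (χ : A × C → ℂˣ), IsChar half ψ χ →
      ∀ a : A, χ (a, 0) * χ (-a, 0) = 1 := by
    intro χ hχ a
    have h := haux χ hχ a (-a) 0
    rw [add_neg_cancel, hone χ hχ] at h
    exact h.symm
  -- stabilizer characterization
  have hstab : ∀ (χ : A × C → ℂˣ), IsChar half ψ χ → ∀ b : A × C,
      (coact ψ b χ = χ ↔ ∀ c : C, χ (-eta ψ b.2 c, 0) = 1) := by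
    intro χ hχ b
    constructor
    · intro h c
      have h0 := congrFun h (0, c)
      simp only [coact, zero_sub] at h0
      have h1 : χ (-eta ψ b.2 c + 0, c) = χ (-eta ψ b.2 c, 0) * χ (0, c) :=
        haux χ hχ _ 0 c
      rw [add_zero] at h1
      rw [h1] at h0
      exact mul_right_cancel (by rw [h0, one_mul])
    · intro h
      funext x
      simp only [coact]
      have h1 : χ (-eta ψ b.2 x.2 + x.1, x.2) = χ (-eta ψ b.2 x.2, 0) * χ (x.1, x.2) :=
        haux χ hχ _ _ _
      rw [sub_eq_add_neg, add_comm, h1, h x.2, one_mul]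
  -- χ₂ agrees with χ₁ on A × {0}
  have hagree : ∀ a : A, χ₂ (a, 0) = χ₁ (a, 0) := by
    intro a
    rw [hg]
    simp [coact, eta, hpsi0l, hpsi0r]
  constructor
  · ext b
    simp only [Set.mem_setOf_eq, hstab χ₁ h₁ b, hstab χ₂ h₂ b]
    constructor <;> intro h c <;> [rw [hagree]; rw [← hagree]] <;> exact h c
  · intro x hx
    have hx' := (hstab χ₁ h₁ x).mp hx
    have key : χ₁ (-eta ψ g.2 x.2, 0) = 1 := by
      have hanti : -eta ψ g.2 x.2 = -(-eta ψ x.2 g.2) := by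
        simp [eta]
      rw [hanti]
      have := hinv χ₁ h₁ (-eta ψ x.2 g.2)
      rw [hx' g.2, one_mul] at this
      exact this
    rw [hg]
    simp only [coact]
    have h1 : χ₁ (-eta ψ g.2 x.2 + x.1, x.2) = χ₁ (-eta ψ g.2 x.2, 0) * χ₁ (x.1, x.2) :=
      haux χ₁ h₁ _ _ _
    rw [sub_eq_add_neg, add_comm, h1, key, one_mul]
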